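/- For any ordinals α, β with α infinite, w(α × (β+1)) = w(α × β) + 1, where α × β carries the componentwise (Cartesian product) order. -/

import Mathlib

universe u

open Ordinal

/-- The rank of a well-founded relation: the least ordinal `γ` admitting a
strictly `r`-decreasing... i.e. `r a b → f a < f b`; equals `sup (rank a + 1)`. -/
noncomputable def relRank {β : Type u} (r : β → β → Prop) : Ordinal.{u} :=
  haveI := Classical.propDecidable (WellFounded r)
  if h : WellFounded r then ⨆ a : β, Order.succ ((h.apply a).rank) else 0

/-- `extRel T s t` : `s` strictly extends `t` (both in tree `T`). -/
def extRel {α : Type u} (T : Set (List α)) (s t : T) : Prop :=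
  t.1 <+: s.1 ∧ t.1 ≠ s.1

/-- Rank of a tree of finite sequences ordered by the initial segment relation. -/
noncomputable def treeRank {α : Type u} (T : Set (List α)) : Ordinal.{u} :=
  relRank (extRel T)

/-- Non-empty finite sequences of pairwise incomparable elements. -/
def IncSeqs (P : Type u) [Preorder P] : Set (List P) :=
  {l | l ≠ [] ∧ l.Pairwise fun x y => ¬ x ≤ y ∧ ¬ y ≤ x}

/-- Non-empty strictly descending finite sequences. -/
def DecSeqs (P : Type u) [Preorder P] : Set (List P) :=
  {l | l ≠ [] ∧ l.Pairwise fun x y => y < x}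

/-- Non-empty bad sequences. -/
def BadSeqs (P : Type u) [Preorder P] : Set (List P) :=
  {l | l ≠ [] ∧ l.Pairwise fun x y => ¬ x ≤ y}

/-- Width of a FAC (quasi-)order: the rank of its tree of antichain sequences. -/
noncomputable def width (P : Type u) [Preorder P] : Ordinal.{u} := treeRank (IncSeqs P)

/-- Height: the rank of the tree of strictly descending sequences. -/
noncomputable def height (P : Type u) [Preorder P] : Ordinal.{u} := treeRank (DecSeqs P)

/-- Maximal order type: the rank of the tree of bad sequences. -/
noncomputable def mot (P : Type u) [Preorder P] : Ordinal.{u} := treeRank (BadSeqs P)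

/-- Finite antichain condition. -/
def FAC (P : Type u) [Preorder P] : Prop :=
  ∀ A : Set P, IsAntichain (· ≤ ·) A → A.Finite

/-- Well quasi-order: every infinite sequence is good. -/
def IsWQO (P : Type u) [Preorder P] : Prop :=
  ∀ f : ℕ → P, ∃ i j : ℕ, i < j ∧ f i ≤ f j

/-- Well partial order. -/
def IsWPO (P : Type u) [Preorder P] : Prop :=
  WellFounded ((· < ·) : P → P → Prop) ∧ FAC P

namespace S16
variable {γ δ : Type u}

theorem rank_le_of_dec {r : γ → γ → Prop} {f : γ → Ordinal.{u}}
    (hf : ∀ a b, r a b → f a < f b) {a : γ} (h : Acc r a) : h.rank ≤ f a := by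
  induction h with
  | intro a ha ih =>
    rw [Acc.rank_eq]
    refine Ordinal.iSup_le_iff.2 fun b => ?_
    rw [Order.succ_le_iff]
    exact lt_of_le_of_lt (ih b.1 b.2) (hf b.1 a b.2)

theorem relRank_eq {r : γ → γ → Prop} (wf : WellFounded r) :
    relRank r = ⨆ a : γ, Order.succ ((wf.apply a).rank) := by
  simp only [relRank]
  rw [dif_pos wf]

theorem rank_lt_relRank {r : γ → γ → Prop} (wf : WellFounded r) (a : γ) :
    (wf.apply a).rank < relRank r := by
  rw [relRank_eq wf]
  exact lt_of_lt_of_le (Order.lt_succ _) (Ordinal.le_iSup _ a)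

theorem relRank_le {r : γ → γ → Prop} (wf : WellFounded r) {o : Ordinal.{u}}
    (h : ∀ a : γ, (wf.apply a).rank < o) : relRank r ≤ o := by
  rw [relRank_eq wf]
  exact Ordinal.iSup_le_iff.2 fun a => Order.succ_le_iff.2 (h a)

theorem wf_of_relHom {r : γ → γ → Prop} {s : δ → δ → Prop}
    (g : γ → δ) (hg : ∀ x y, r x y → s (g x) (g y)) (wf : WellFounded s) : WellFounded r :=
  Subrelation.wf (fun {x y} h => hg x y h) (InvImage.wf g wf)

theorem relRank_le_relRank {r : γ → γ → Prop} {s : δ → δ → Prop}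
    (g : γ → δ) (hg : ∀ x y, r x y → s (g x) (g y)) (wf : WellFounded s) :
    relRank r ≤ relRank s := by
  have wfr := wf_of_relHom g hg wf
  refine relRank_le wfr fun a => lt_of_le_of_lt
    (rank_le_of_dec (f := fun x => (wf.apply (g x)).rank) ?_ _) (rank_lt_relRank wf (g a))
  intro x y h
  exact Acc.rank_lt_of_rel (wf.apply (g y)) (hg x y h)

theorem len_lt {l₁ l₂ : List γ} (h : l₁ <+: l₂) (hne : l₁ ≠ l₂) : l₁.length < l₂.length :=
  lt_of_le_of_ne h.length_le fun e => hne (List.IsPrefix.eq_of_length h e)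

variable {P Q : Type u} [Preorder P] [Preorder Q]

theorem incseq_map_mem (g : P → Q)
    (hg : ∀ x y : P, ¬ x ≤ y → ¬ y ≤ x → ¬ g x ≤ g y ∧ ¬ g y ≤ g x)
    {l : List P} (hl : l ∈ IncSeqs P) : l.map g ∈ IncSeqs Q :=
  ⟨fun e => hl.1 (List.map_eq_nil_iff.1 e), hl.2.map g fun a b h => hg a b h.1 h.2⟩

def treeMap (g : P → Q)
    (hg : ∀ x y : P, ¬ x ≤ y → ¬ y ≤ x → ¬ g x ≤ g y ∧ ¬ g y ≤ g x)
    (l : ↥(IncSeqs P)) : ↥(IncSeqs Q) := ⟨l.1.map g, incseq_map_mem g hg l.2⟩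

theorem treeMap_rel (g : P → Q) (hg : ∀ x y : P, ¬ x ≤ y → ¬ y ≤ x → ¬ g x ≤ g y ∧ ¬ g y ≤ g x)
    {s t : ↥(IncSeqs P)} (h : extRel _ s t) :
    extRel _ (treeMap g hg s) (treeMap g hg t) := by
  constructor
  · exact h.1.map g
  · intro e
    have h2 : (t.1.map g).length = (s.1.map g).length := congrArg List.length e
    simp only [List.length_map] at h2
    exact absurd h2 (ne_of_lt (len_lt h.1 h.2))

theorem wf_IncSeqs_of_map (g : P → Q)
    (hg : ∀ x y : P, ¬ x ≤ y → ¬ y ≤ x → ¬ g x ≤ g y ∧ ¬ g y ≤ g x)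
    (wfQ : WellFounded (extRel (IncSeqs Q))) : WellFounded (extRel (IncSeqs P)) :=
  wf_of_relHom (treeMap g hg) (fun _ _ h => treeMap_rel g hg h) wfQ

theorem width_le_of_map (g : P → Q)
    (hg : ∀ x y : P, ¬ x ≤ y → ¬ y ≤ x → ¬ g x ≤ g y ∧ ¬ g y ≤ g x)
    (wfQ : WellFounded (extRel (IncSeqs Q))) : width P ≤ width Q :=
  relRank_le_relRank (treeMap g hg) (fun _ _ h => treeMap_rel g hg h) wfQ

theorem width_eq_of_iso (e : P ≃o Q)
    (wfQ : WellFounded (extRel (IncSeqs Q))) : width P = width Q := by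
  have h1 : ∀ x y : P, ¬ x ≤ y → ¬ y ≤ x → ¬ e x ≤ e y ∧ ¬ e y ≤ e x := fun x y h h' =>
    ⟨fun c => h (e.le_iff_le.1 c), fun c => h' (e.le_iff_le.1 c)⟩
  have h2 : ∀ x y : Q, ¬ x ≤ y → ¬ y ≤ x → ¬ e.symm x ≤ e.symm y ∧ ¬ e.symm y ≤ e.symm x :=
    fun x y h h' => ⟨fun c => h (e.symm.le_iff_le.1 c), fun c => h' (e.symm.le_iff_le.1 c)⟩
  exact le_antisymm (width_le_of_map e h1 wfQ)
    (width_le_of_map e.symm h2 (wf_IncSeqs_of_map e h1 wfQ))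

def prodIso {P₁ Q₁ P₂ Q₂ : Type*} [Preorder P₁] [Preorder Q₁] [Preorder P₂] [Preorder Q₂]
    (e₁ : P₁ ≃o Q₁) (e₂ : P₂ ≃o Q₂) : P₁ × P₂ ≃o Q₁ × Q₂ where
  toEquiv := e₁.toEquiv.prodCongr e₂.toEquiv
  map_rel_iff' := by
    rintro ⟨a, b⟩ ⟨c, d⟩
    simp [Prod.le_def, e₁.le_iff_le, e₂.le_iff_le]

theorem isWQO_prod {P₁ P₂ : Type u} [LinearOrder P₁] [LinearOrder P₂]
    [WellFoundedLT P₁] [WellFoundedLT P₂] (F : ℕ → P₁ × P₂) : ∃ i j, i < j ∧ F i ≤ F j := by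
  have h1 : (Set.univ : Set P₁).IsPWO := (Set.isWF_univ_iff.2 inferInstance).isPWO
  have h2 : (Set.univ : Set P₂).IsPWO := (Set.isWF_univ_iff.2 inferInstance).isPWO
  obtain ⟨m, n, h, hle⟩ := Set.PartiallyWellOrderedOn.exists_lt (h1.prod h2) (f := F) fun n => Set.mk_mem_prod trivial trivial
  exact ⟨m, n, h, hle⟩

theorem wf_extRel_prod {P₁ P₂ : Type u} [LinearOrder P₁] [LinearOrder P₂]
    [WellFoundedLT P₁] [WellFoundedLT P₂] :
    WellFounded (extRel (IncSeqs (P₁ × P₂))) := by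
  haveI : IsIrrefl ↥(IncSeqs (P₁ × P₂)) (extRel _) := ⟨fun a h => h.2 rfl⟩
  haveI : IsTrans ↥(IncSeqs (P₁ × P₂)) (extRel _) :=
    ⟨fun a b c h₁ h₂ => ⟨h₂.1.trans h₁.1,
      ne_of_lt (lt_trans (len_lt h₂.1 h₂.2) (len_lt h₁.1 h₁.2)) ∘ congrArg List.length⟩⟩
  haveI : IsStrictOrder ↥(IncSeqs (P₁ × P₂)) (extRel _) := ⟨⟩
  rw [RelEmbedding.wellFounded_iff_isEmpty]
  refine ⟨fun e => ?_⟩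
  have hstep : ∀ n : ℕ, extRel _ (e (n + 1)) (e n) := fun n => e.map_rel_iff.2 (n.lt_succ_self)
  have hlen : ∀ n : ℕ, ((e n).1).length < ((e (n + 1)).1).length :=
    fun n => len_lt (hstep n).1 (hstep n).2
  have hmono : StrictMono fun n => ((e n).1).length := strictMono_nat_of_lt_succ hlen
  have hpre : ∀ m n : ℕ, m ≤ n → (e m).1 <+: (e n).1 := by
    intro m n h
    induction n, h using Nat.le_induction with
    | base => exact List.prefix_refl _
    | succ k hk ih => exact ih.trans (hstep k).1
  set F : ℕ → P₁ × P₂ := fun n => ((e (n + 1)).1)[((e n).1).length]'(hlen n) with hF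
  have hinc : ∀ i j : ℕ, i < j → ¬ F i ≤ F j ∧ ¬ F j ≤ F i := by
    intro i j hij
    have hij1 : i + 1 ≤ j := hij
    have h1 : ((e i).1).length < ((e (j + 1)).1).length :=
      lt_of_lt_of_le (hlen i) ((hpre (i+1) (j+1) (by omega)).length_le)
    have hFi : F i = ((e (j + 1)).1)[((e i).1).length]'h1 :=
      (hpre (i+1) (j+1) (by omega)).getElem (hlen i)
    have h2 : ((e i).1).length < ((e j).1).length := hmono hij
    have := (List.pairwise_iff_getElem.1 (e (j+1)).2.2) ((e i).1).length ((e j).1).length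
      h1 (hlen j) h2
    rw [hFi]
    exact this
  obtain ⟨i, j, hij, hle⟩ := isWQO_prod F
  exact (hinc i j hij).1 hle


section Core

variable {α β : Ordinal.{u}}

noncomputable def dn {o : Ordinal.{u}} (x : o.ToType) : Ordinal.{u} :=
  (((Ordinal.ToType.mk (o := o))).symm x).1

theorem dn_lt {o : Ordinal.{u}} (x : o.ToType) : dn x < o := (((Ordinal.ToType.mk (o := o))).symm x).2

theorem le_iff_dn_le {o : Ordinal.{u}} {x y : o.ToType} : x ≤ y ↔ dn x ≤ dn y := by
  rw [dn, dn, Subtype.coe_le_coe]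
  exact ((Ordinal.ToType.mk (o := o))).symm.le_iff_le.symm

theorem dn_inj {o : Ordinal.{u}} {x y : o.ToType} (h : dn x = dn y) : x = y := by
  have := le_antisymm (le_iff_dn_le.2 h.le) (le_iff_dn_le.2 h.ge)
  exact this

noncomputable def en (o : Ordinal.{u}) (v : Ordinal.{u}) (h : v < o) : o.ToType :=
  (Ordinal.ToType.mk (o := o)) ⟨v, h⟩

theorem dn_en {o v : Ordinal.{u}} (h : v < o) : dn (en o v h) = v := by
  rw [dn, en, OrderIso.symm_apply_apply]

variable (α β)

open scoped Classical in
noncomputable def toP (p : α.ToType × (β + 1).ToType) :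
    Option (α.ToType × β.ToType) :=
  if h : dn p.2 < β then some (p.1, en β (dn p.2) h) else none

variable {α β}

theorem mem_toP {p : α.ToType × (β + 1).ToType} {b} (h : b ∈ toP α β p) :
    b.1 = p.1 ∧ dn b.2 = dn p.2 := by
  rw [toP] at h
  split at h
  · rw [Option.mem_def] at h
    cases h
    exact ⟨rfl, dn_en _⟩
  · exact absurd h (by simp)

theorem le_of_toP_le {p q : α.ToType × (β + 1).ToType} {b c} (hb : b ∈ toP α β p)
    (hc : c ∈ toP α β q) (h : b ≤ c) : p ≤ q := by
  obtain ⟨hb1, hb2⟩ := mem_toP hb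
  obtain ⟨hc1, hc2⟩ := mem_toP hc
  rw [Prod.le_def] at h ⊢
  refine ⟨hb1 ▸ hc1 ▸ h.1, ?_⟩
  rw [le_iff_dn_le, ← hb2, ← hc2, ← le_iff_dn_le]
  exact h.2

theorem filterMap_mem {l : List (α.ToType × (β + 1).ToType)} (hl : l ∈ IncSeqs _)
    (h : l.filterMap (toP α β) ≠ []) :
    l.filterMap (toP α β) ∈ IncSeqs (α.ToType × β.ToType) := by
  refine ⟨h, List.pairwise_filterMap.2 (hl.2.imp ?_)⟩
  rintro a a' ⟨h1, h2⟩
  intro b hb b' hb'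
  exact ⟨fun c => h1 (le_of_toP_le hb hb' c), fun c => h2 (le_of_toP_le hb' hb c)⟩

theorem top_snd {v : Ordinal.{u}} (hv : v < β + 1) (h : ¬ v < β) : v = β := by
  rw [Ordinal.add_one_eq_succ, Order.lt_succ_iff] at hv
  exact le_antisymm hv (not_lt.1 h)

theorem comparable_of_top {p q : α.ToType × (β + 1).ToType}
    (hp : ¬ dn p.2 < β) (hq : ¬ dn q.2 < β) : p ≤ q ∨ q ≤ p := by
  have h2 : p.2 = q.2 := dn_inj ((top_snd (dn_lt p.2) hp).trans (top_snd (dn_lt q.2) hq).symm)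
  rcases le_total p.1 q.1 with h | h
  · exact Or.inl (Prod.le_def.2 ⟨h, h2.le⟩)
  · exact Or.inr (Prod.le_def.2 ⟨h, h2.ge⟩)

theorem nonempty_filterMap {u : List (α.ToType × (β + 1).ToType)} (hu : u ≠ [])
    (hsm : ∀ q ∈ u, dn q.2 < β) : u.filterMap (toP α β) ≠ [] := by
  obtain ⟨q, u', rfl⟩ := List.exists_cons_of_ne_nil hu
  intro e
  rw [List.filterMap_eq_nil_iff] at e
  have h1 := e q (List.mem_cons_self)
  rw [toP, dif_pos (hsm q (List.mem_cons_self))] at h1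
  exact Option.some_ne_none _ h1

variable (α β)

open scoped Classical in
noncomputable def ffun
    (wfP : WellFounded (extRel (IncSeqs (α.ToType × β.ToType))))
    (s : ↥(IncSeqs (α.ToType × (β + 1).ToType))) : Ordinal.{u} :=
  if h : s.1.filterMap (toP α β) = [] then width (α.ToType × β.ToType)
  else (wfP.apply ⟨s.1.filterMap (toP α β), filterMap_mem s.2 h⟩).rank +
    (if ∀ p ∈ s.1, dn p.2 < β then 1 else 0)

variable {α β}

theorem ffun_le (wfP : WellFounded (extRel (IncSeqs (α.ToType × β.ToType))))
    (s : ↥(IncSeqs (α.ToType × (β + 1).ToType))) :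
    ffun α β wfP s ≤ width (α.ToType × β.ToType) := by
  rw [ffun]
  split
  · exact le_rfl
  next hne =>
    have h1 : (wfP.apply ⟨s.1.filterMap (toP α β), filterMap_mem s.2 hne⟩).rank + (1 : Ordinal) ≤
        width (α.ToType × β.ToType) := Order.add_one_le_iff.2 (rank_lt_relRank wfP _)
    refine le_trans (add_le_add_right ?_ _) h1
    split <;> simp

theorem ffun_dec (wfP : WellFounded (extRel (IncSeqs (α.ToType × β.ToType))))
    {s t : ↥(IncSeqs (α.ToType × (β + 1).ToType))}
    (h : extRel _ s t) : ffun α β wfP s < ffun α β wfP t := by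
  obtain ⟨u, hu⟩ := h.1
  have hune : u ≠ [] := by
    intro e
    apply h.2
    rw [← hu, e, List.append_nil]
  have hs : s.1 = t.1 ++ u := hu.symm
  have hst : s.1.filterMap (toP α β) = t.1.filterMap (toP α β) ++ u.filterMap (toP α β) := by
    rw [hs, List.filterMap_append]
  have hcross : ∀ p ∈ t.1, ∀ q ∈ u, ¬ p ≤ q ∧ ¬ q ≤ p := by
    have h2 := s.2.2
    rw [hs, List.pairwise_append] at h2
    exact h2.2.2
  by_cases ht : ∀ p ∈ t.1, dn p.2 < β
  · -- t contains no top element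
    have hπt : t.1.filterMap (toP α β) ≠ [] := nonempty_filterMap t.2.1 ht
    have hπs : s.1.filterMap (toP α β) ≠ [] := by
      rw [hst]
      intro e
      exact hπt (List.append_eq_nil_iff.1 e).1
    by_cases hsall : ∀ p ∈ s.1, dn p.2 < β
    · -- strict decrease with +1 on both sides
      have hπu : u.filterMap (toP α β) ≠ [] :=
        nonempty_filterMap hune fun q hq => hsall q (by rw [hs]; exact List.mem_append_right _ hq)
      have hrel : extRel (IncSeqs (α.ToType × β.ToType))
          ⟨s.1.filterMap (toP α β), filterMap_mem s.2 hπs⟩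
          ⟨t.1.filterMap (toP α β), filterMap_mem t.2 hπt⟩ := by
        constructor
        · show t.1.filterMap (toP α β) <+: s.1.filterMap (toP α β)
          rw [hst]; exact List.prefix_append _ _
        · show t.1.filterMap (toP α β) ≠ s.1.filterMap (toP α β)
          rw [hst]
          intro e
          have h3 := congrArg List.length e
          rw [List.length_append] at h3
          have : (u.filterMap (toP α β)).length = 0 := by omega
          exact hπu (List.length_eq_zero_iff.1 this)
      have hlt : (wfP.apply ⟨s.1.filterMap (toP α β), filterMap_mem s.2 hπs⟩).rank <
          (wfP.apply ⟨t.1.filterMap (toP α β), filterMap_mem t.2 hπt⟩).rank :=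
        Acc.rank_lt_of_rel _ hrel
      rw [ffun, ffun, dif_neg hπs, dif_neg hπt, if_pos hsall, if_pos ht]
      exact lt_of_le_of_lt (Order.add_one_le_iff.2 hlt) (Order.lt_add_one_iff.2 le_rfl)
    · -- s acquires a top element: drop the +1
      have hrk : (wfP.apply ⟨s.1.filterMap (toP α β), filterMap_mem s.2 hπs⟩).rank ≤
          (wfP.apply ⟨t.1.filterMap (toP α β), filterMap_mem t.2 hπt⟩).rank := by
        by_cases hπu : u.filterMap (toP α β) = []
        · have hexact : s.1.filterMap (toP α β) = t.1.filterMap (toP α β) := by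
            rw [hst, hπu, List.append_nil]
          have : (⟨s.1.filterMap (toP α β), filterMap_mem s.2 hπs⟩ :
              ↥(IncSeqs (α.ToType × β.ToType))) = ⟨t.1.filterMap (toP α β), filterMap_mem t.2 hπt⟩ :=
            Subtype.ext hexact
          rw [this]
        · refine le_of_lt (Acc.rank_lt_of_rel _ ?_)
          constructor
          · show t.1.filterMap (toP α β) <+: s.1.filterMap (toP α β)
            rw [hst]; exact List.prefix_append _ _
          · show t.1.filterMap (toP α β) ≠ s.1.filterMap (toP α β)
            rw [hst]
            intro e
            have h3 := congrArg List.length e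
            rw [List.length_append] at h3
            exact hπu (List.length_eq_zero_iff.1 (by omega))
      rw [ffun, ffun, dif_neg hπs, dif_neg hπt, if_neg hsall, if_pos ht, add_zero]
      exact lt_of_le_of_lt hrk (Order.lt_add_one_iff.2 le_rfl)
  · -- t contains a top element
    push_neg at ht
    obtain ⟨p₀, hp₀t, hp₀'⟩ := ht
    have hp₀ : ¬ dn p₀.2 < β := not_lt.2 hp₀'
    have hu' : ∀ q ∈ u, dn q.2 < β := by
      intro q hq
      by_contra hq'
      rcases comparable_of_top hp₀ hq' with hc | hc
      · exact (hcross p₀ hp₀t q hq).1 hc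
      · exact (hcross p₀ hp₀t q hq).2 hc
    have hπu : u.filterMap (toP α β) ≠ [] := nonempty_filterMap hune hu'
    have hπs : s.1.filterMap (toP α β) ≠ [] := by
      rw [hst]
      intro e
      exact hπu (List.append_eq_nil_iff.1 e).2
    have hsnot : ¬ ∀ p ∈ s.1, dn p.2 < β := fun hall =>
      hp₀ (hall p₀ (by rw [hs]; exact List.mem_append_left _ hp₀t))
    have htnot : ¬ ∀ p ∈ t.1, dn p.2 < β := fun hall => hp₀ (hall p₀ hp₀t)
    rw [ffun, ffun, dif_neg hπs, if_neg hsnot, add_zero]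
    by_cases hπt : t.1.filterMap (toP α β) = []
    · rw [dif_pos hπt]
      exact rank_lt_relRank wfP _
    · rw [dif_neg hπt, if_neg htnot, add_zero]
      refine Acc.rank_lt_of_rel _ ?_
      constructor
      · show t.1.filterMap (toP α β) <+: s.1.filterMap (toP α β)
        rw [hst]; exact List.prefix_append _ _
      · show t.1.filterMap (toP α β) ≠ s.1.filterMap (toP α β)
        rw [hst]
        intro e
        have h3 := congrArg List.length e
        rw [List.length_append] at h3
        exact hπu (List.length_eq_zero_iff.1 (by omega))

end Core
section Main

theorem en_le_en {o v w : Ordinal.{u}} (h : v < o) (h' : w < o) :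
    en o v h ≤ en o w h' ↔ v ≤ w := by
  rw [le_iff_dn_le, dn_en, dn_en]

theorem upper (α β : Ordinal.{u}) :
    width (α.ToType × (β + 1).ToType) ≤ width (α.ToType × β.ToType) + 1 := by
  have wfP : WellFounded (extRel (IncSeqs (α.ToType × β.ToType))) := wf_extRel_prod
  have wfP' : WellFounded (extRel (IncSeqs (α.ToType × (β + 1).ToType))) := wf_extRel_prod
  refine relRank_le wfP' fun s => ?_
  exact lt_of_le_of_lt
    (le_trans (rank_le_of_dec (f := ffun α β wfP) (fun a b h => ffun_dec wfP h) (wfP'.apply s))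
      (ffun_le wfP s))
    (Order.lt_add_one_iff.2 le_rfl)

theorem lower (α β : Ordinal.{u}) (hα : Ordinal.omega0 ≤ α) :
    width (α.ToType × β.ToType) + 1 ≤ width (α.ToType × (β + 1).ToType) := by
  classical
  have wfP' : WellFounded (extRel (IncSeqs (α.ToType × (β + 1).ToType))) := wf_extRel_prod
  have hα0 : (0 : Ordinal.{u}) < α := lt_of_lt_of_le omega0_pos hα
  have hβ1 : β < β + 1 := Order.lt_add_one_iff.2 le_rfl
  set φ : Ordinal.{u} → Ordinal.{u} := fun v => if v < omega0 then v + 1 else v with hφ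
  have hφmono : StrictMono φ := by
    intro v w hvw
    simp only [φ]
    split_ifs with h1 h2 h2
    · exact lt_of_le_of_lt (Order.add_one_le_iff.2 hvw) (Order.lt_add_one_iff.2 le_rfl)
    · refine lt_of_lt_of_le ?_ (not_lt.1 h2)
      rw [Ordinal.add_one_eq_succ]
      exact Ordinal.isSuccLimit_omega0.succ_lt h1
    · exact absurd hvw (not_lt.2 (le_of_lt (lt_of_lt_of_le h2 (not_lt.1 h1))))
    · exact hvw
  have hφlt : ∀ v, v < α → φ v < α := by
    intro v hv
    simp only [φ]
    split_ifs with h1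
    · refine lt_of_lt_of_le ?_ hα
      rw [Ordinal.add_one_eq_succ]
      exact Ordinal.isSuccLimit_omega0.succ_lt h1
    · exact hv
  have hφpos : ∀ v, 0 < φ v := by
    intro v
    simp only [φ]
    split_ifs with h1
    · exact Order.lt_add_one_iff.2 (zero_le (a := v))
    · exact lt_of_lt_of_le omega0_pos (not_lt.1 h1)
  set gP : α.ToType × β.ToType → α.ToType × (β + 1).ToType := fun p =>
    (en α (φ (dn p.1)) (hφlt _ (dn_lt p.1)), en (β + 1) (dn p.2) (lt_trans (dn_lt p.2) hβ1))
    with hgPdef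
  have hgP : ∀ p q, gP p ≤ gP q ↔ p ≤ q := by
    intro p q
    rw [Prod.le_def, Prod.le_def]
    simp only [gP]
    rw [en_le_en, en_le_en, hφmono.le_iff_le, ← le_iff_dn_le, ← le_iff_dn_le]
  have hginc : ∀ x y : α.ToType × β.ToType,
      ¬ x ≤ y → ¬ y ≤ x → ¬ gP x ≤ gP y ∧ ¬ gP y ≤ gP x := fun x y h h' =>
    ⟨fun c => h ((hgP x y).1 c), fun c => h' ((hgP y x).1 c)⟩
  set a₀ : α.ToType := en α 0 hα0 with ha₀
  set btop : (β + 1).ToType := en (β + 1) β hβ1 with hbtop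
  have hnotle1 : ∀ p : α.ToType × β.ToType, ¬ (a₀, btop) ≤ gP p := by
    intro p hle
    have h2 : btop ≤ (gP p).2 := hle.2
    rw [hbtop] at h2
    rw [en_le_en] at h2
    exact absurd h2 (not_le.2 (dn_lt p.2))
  have hnotle2 : ∀ p : α.ToType × β.ToType, ¬ gP p ≤ (a₀, btop) := by
    intro p hle
    have h1 : (gP p).1 ≤ a₀ := hle.1
    rw [ha₀] at h1
    rw [en_le_en] at h1
    exact absurd h1 (not_le.2 (hφpos (dn p.1)))
  have memG : ∀ u : ↥(IncSeqs (α.ToType × β.ToType)),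
      ((a₀, btop) :: u.1.map gP) ∈ IncSeqs (α.ToType × (β + 1).ToType) := by
    intro u
    refine ⟨List.cons_ne_nil _ _, List.pairwise_cons.2 ⟨?_, ?_⟩⟩
    · intro q hq
      obtain ⟨p, _, rfl⟩ := List.mem_map.1 hq
      exact ⟨hnotle1 p, hnotle2 p⟩
    · exact u.2.2.map gP fun a b hab => ⟨fun c => hab.1 ((hgP a b).1 c),
        fun c => hab.2 ((hgP b a).1 c)⟩
  set G : ↥(IncSeqs (α.ToType × β.ToType)) → ↥(IncSeqs (α.ToType × (β + 1).ToType)) :=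
    fun u => ⟨(a₀, btop) :: u.1.map gP, memG u⟩ with hGdef
  set node : ↥(IncSeqs (α.ToType × (β + 1).ToType)) :=
    ⟨[(a₀, btop)], ⟨List.cons_ne_nil _ _, List.pairwise_singleton _ _⟩⟩ with hnode
  have hG : ∀ u v, extRel _ u v → extRel _ (G u) (G v) := by
    intro u v h
    constructor
    · show (a₀, btop) :: v.1.map gP <+: (a₀, btop) :: u.1.map gP
      exact List.cons_prefix_cons.2 ⟨rfl, h.1.map gP⟩
    · intro e
      have h3 := congrArg List.length e
      simp only [G, List.length_cons, List.length_map] at h3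
      exact absurd (by omega : v.1.length = u.1.length) (ne_of_lt (len_lt h.1 h.2))
  have hGn : ∀ u, extRel _ (G u) node := by
    intro u
    constructor
    · show [(a₀, btop)] <+: (a₀, btop) :: u.1.map gP
      exact List.cons_prefix_cons.2 ⟨rfl, List.nil_prefix⟩
    · intro e
      have h3 := congrArg List.length e
      simp only [G, node, List.length_cons, List.length_map, List.length_nil] at h3
      exact u.2.1 (List.length_eq_zero_iff.1 (by omega))
  have wfP : WellFounded (extRel (IncSeqs (α.ToType × β.ToType))) :=
    wf_IncSeqs_of_map gP hginc wfP'
  have key : width (α.ToType × β.ToType) ≤ (wfP'.apply node).rank := by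
    refine relRank_le wfP fun u => ?_
    refine lt_of_le_of_lt
      (rank_le_of_dec (f := fun u => (wfP'.apply (G u)).rank) ?_ (wfP.apply u)) ?_
    · intro a b h
      exact Acc.rank_lt_of_rel _ (hG a b h)
    · exact Acc.rank_lt_of_rel _ (hGn u)
  exact Order.add_one_le_iff.2 (lt_of_le_of_lt key (rank_lt_relRank wfP' node))

end Main
end S16


/-- **Abraham.** For `α` infinite,
`w(α × (β+1)) = w(α × β) + 1` (componentwise product order). -/
theorem stmt_16 (α β : Ordinal.{u}) (hα : Ordinal.omega0 ≤ α) :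
    width (α.ToType × (β + 1).ToType) = width (α.ToType × β.ToType) + 1 := le_antisymm (S16.upper α β) (S16.lower α β hα)
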